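/- Let S be a random variable with the beta distribution β(s, t), s > 0, t > 0. Then E[ln(S) · ln(1 − S)] = −ψ′(s + t) + (ψ(s) − ψ(s + t))(ψ(t) − ψ(s + t)); equivalently Cov(ln S, ln(1 − S)) = −ψ′(s + t). -/

import Mathlib

open MeasureTheory ProbabilityTheory

/-- The beta distribution `β(s, t)` with parameters `s, t > 0`, having density
`x ↦ x^(s-1) (1-x)^(t-1) Γ(s+t)/(Γ(s)Γ(t))` on `(0, 1)`. -/
noncomputable def betaDistMeasure (s t : ℝ) : Measure ℝ :=
  MeasureTheory.volume.withDensity (fun x => ENNReal.ofReal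
    (if x ∈ Set.Ioo (0 : ℝ) 1 then
      x ^ (s - 1) * (1 - x) ^ (t - 1) * Real.Gamma (s + t) / (Real.Gamma s * Real.Gamma t)
    else 0))

/-- The digamma function `ψ`, the derivative of `x ↦ ln Γ(x)`. -/
noncomputable def digamma (x : ℝ) : ℝ := deriv (fun y => Real.log (Real.Gamma y)) x

/-- The trigamma function `ψ′`, the derivative of the digamma function. -/
noncomputable def trigamma (x : ℝ) : ℝ := deriv digamma x

open Real Set
open scoped ENNReal NNReal

lemma analyticAt_realGamma {x : ℝ} (hx : 0 < x) : AnalyticAt ℝ Real.Gamma x := by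
  have hopen : IsOpen {z : ℂ | 0 < z.re} := isOpen_lt continuous_const Complex.continuous_re
  have hC : AnalyticOnNhd ℂ Complex.Gamma {z : ℂ | 0 < z.re} := by
    apply DifferentiableOn.analyticOnNhd _ hopen
    intro z hz
    refine (Complex.differentiableAt_Gamma z ?_).differentiableWithinAt
    intro m h
    rw [h] at hz
    simp only [Set.mem_setOf_eq] at hz
    have : ((-m : ℂ)).re = -(m:ℝ) := by simp
    rw [this] at hz
    have : (0:ℝ) ≤ m := m.cast_nonneg
    linarith
  have h1 : AnalyticAt ℝ Complex.Gamma ((x : ℂ)) := (hC (x:ℂ) (by simpa using hx)).restrictScalars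
  have h2 : AnalyticAt ℝ (fun y : ℝ => (y : ℂ)) x := Complex.ofRealCLM.analyticAt x
  have h3 : AnalyticAt ℝ (fun y : ℝ => Complex.Gamma (y : ℂ)) x := h1.comp h2
  have h4 : AnalyticAt ℝ (fun y : ℝ => (Complex.Gamma (y : ℂ)).re) x :=
    (Complex.reCLM.analyticAt _).comp h3
  refine h4.congr ?_
  filter_upwards with y
  rw [Complex.Gamma_ofReal]
  simp

lemma contDiffOn_logGamma : ContDiffOn ℝ ⊤ (fun y => Real.log (Real.Gamma y)) (Ioi 0) := by
  intro x hx
  have hx' : (0:ℝ) < x := hx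
  have h1 : ContDiffAt ℝ ⊤ Real.Gamma x := (analyticAt_realGamma hx').contDiffAt
  have h2 : ContDiffAt ℝ ⊤ Real.log (Real.Gamma x) :=
    Real.contDiffAt_log.2 (Real.Gamma_pos_of_pos hx').ne'
  exact (h2.comp x h1).contDiffWithinAt

lemma contDiffOn_digamma : ContDiffOn ℝ ⊤ digamma (Ioi 0) := by
  have := contDiffOn_logGamma.deriv_of_isOpen isOpen_Ioi (m := ⊤) le_top
  exact this

lemma hasDerivAt_logGamma {x : ℝ} (hx : 0 < x) :
    HasDerivAt (fun y => Real.log (Real.Gamma y)) (digamma x) x := by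
  have h := (contDiffOn_logGamma x hx).differentiableWithinAt (by norm_num)
  have := h.differentiableAt (Ioi_mem_nhds hx)
  exact this.hasDerivAt

lemma hasDerivAt_digamma {x : ℝ} (hx : 0 < x) :
    HasDerivAt digamma (trigamma x) x := by
  have h := (contDiffOn_digamma x hx).differentiableWithinAt (by norm_num)
  have := h.differentiableAt (Ioi_mem_nhds hx)
  exact this.hasDerivAt

noncomputable def Bfn (a b : ℝ) : ℝ := Real.Gamma a * Real.Gamma b / Real.Gamma (a + b)

lemma Bfn_symm (a b : ℝ) : Bfn a b = Bfn b a := by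
  unfold Bfn; rw [mul_comm, add_comm]

lemma Bfn_eq_exp {a b : ℝ} (ha : 0 < a) (hb : 0 < b) :
    Bfn a b = Real.exp (Real.log (Real.Gamma a) + Real.log (Real.Gamma b)
      - Real.log (Real.Gamma (a + b))) := by
  rw [Real.exp_sub, Real.exp_add, Real.exp_log (Real.Gamma_pos_of_pos ha),
    Real.exp_log (Real.Gamma_pos_of_pos hb),
    Real.exp_log (Real.Gamma_pos_of_pos (by linarith))]
  rfl

lemma hasDerivAt_Bfn_left {a b : ℝ} (ha : 0 < a) (hb : 0 < b) :
    HasDerivAt (fun a' => Bfn a' b) (Bfn a b * (digamma a - digamma (a + b))) a := by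
  set L := fun y => Real.log (Real.Gamma y) with hL
  have hg : HasDerivAt (fun a' => L a' + L b - L (a' + b))
      (digamma a - digamma (a + b)) a := by
    have h1 : HasDerivAt (fun a' => L a' + L b) (digamma a) a :=
      (hasDerivAt_logGamma ha).add_const _
    have h2 : HasDerivAt (fun a' : ℝ => L (a' + b)) (digamma (a + b)) a := by
      have := (hasDerivAt_logGamma (show (0:ℝ) < a + b by linarith)).comp a
        ((hasDerivAt_id a).add_const b)
      exact this.congr_deriv (mul_one _)
    exact h1.sub h2
  have he := hg.exp
  rw [← Bfn_eq_exp ha hb] at he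
  refine he.congr_of_eventuallyEq ?_
  filter_upwards [Ioi_mem_nhds ha] with a' ha'
  exact Bfn_eq_exp ha' hb

lemma hasDerivAt_Bfn_right {a b : ℝ} (ha : 0 < a) (hb : 0 < b) :
    HasDerivAt (fun b' => Bfn a b') (Bfn a b * (digamma b - digamma (a + b))) b := by
  have h := hasDerivAt_Bfn_left hb ha
  simp only [Bfn_symm _ a] at h
  rw [add_comm b a] at h
  exact h

lemma hasDerivAt_Bfn_mixed {a b : ℝ} (ha : 0 < a) (hb : 0 < b) :
    HasDerivAt (fun b' => Bfn a b' * (digamma a - digamma (a + b')))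
      (Bfn a b * ((digamma a - digamma (a + b)) * (digamma b - digamma (a + b))
        - trigamma (a + b))) b := by
  have h1 := hasDerivAt_Bfn_right ha hb
  have h2 : HasDerivAt (fun b' => digamma a - digamma (a + b')) (-trigamma (a + b)) b := by
    have := (hasDerivAt_digamma (show (0:ℝ) < a + b by linarith)).comp b
      ((hasDerivAt_id b).const_add a)
    exact ((hasDerivAt_const b (digamma a)).sub this).congr_deriv (by ring)
  have := h1.mul h2
  refine this.congr_deriv ?_
  ring

noncomputable def Jf (p q : ℕ) (a b : ℝ) (x : ℝ) : ℝ :=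
  Real.log x ^ p * Real.log (1 - x) ^ q * (x ^ (a - 1) * (1 - x) ^ (b - 1))

noncomputable def J (p q : ℕ) (a b : ℝ) : ℝ := ∫ x in Ioo (0:ℝ) 1, Jf p q a b x

lemma integrableOn_rpow_beta {c d : ℝ} (hc : 0 < c) (hd : 0 < d) :
    IntegrableOn (fun x : ℝ => x ^ (c - 1) * (1 - x) ^ (d - 1)) (Ioo 0 1) := by
  have h := Complex.betaIntegral_convergent (u := (c:ℂ)) (v := (d:ℂ)) (by simpa) (by simpa)
  rw [intervalIntegrable_iff_integrableOn_Ioo_of_le zero_le_one] at h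
  have h2 : IntegrableOn (fun x : ℝ => ‖(x:ℂ) ^ ((c:ℂ) - 1) * (1 - (x:ℂ)) ^ ((d:ℂ) - 1)‖) (Ioo 0 1) := h.norm
  refine IntegrableOn.congr_fun h2 ?_ measurableSet_Ioo
  intro x hx
  obtain ⟨hx0, hx1⟩ := hx
  simp only [norm_mul]
  rw [show (1:ℂ) - (x:ℂ) = ((1-x:ℝ):ℂ) by push_cast; ring]
  rw [Complex.norm_cpow_eq_rpow_re_of_pos hx0, Complex.norm_cpow_eq_rpow_re_of_pos (by linarith)]
  norm_num

lemma abs_log_le_rpow {x δ : ℝ} (h0 : 0 < x) (h1 : x < 1) (hδ : 0 < δ) :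
    |Real.log x| ≤ x ^ (-δ) / δ := by
  rw [abs_of_nonpos (Real.log_nonpos h0.le h1.le), ← Real.log_inv]
  calc Real.log x⁻¹ ≤ (x⁻¹) ^ δ / δ := Real.log_le_rpow_div (by positivity) hδ
    _ = x ^ (-δ) / δ := by rw [← Real.rpow_neg_one x, ← Real.rpow_mul h0.le]; norm_num

lemma continuousOn_log_Ioo : ContinuousOn Real.log (Ioo (0:ℝ) 1) :=
  Real.continuousOn_log.mono (fun x hx => by simp [hx.1.ne'])

lemma continuousOn_log1_Ioo : ContinuousOn (fun x : ℝ => Real.log (1 - x)) (Ioo (0:ℝ) 1) := by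
  apply Real.continuousOn_log.comp ((continuous_const.sub continuous_id).continuousOn)
  intro x hx
  simp only [Set.mem_compl_iff, Set.mem_singleton_iff]
  have := hx.2
  intro h; simp at h; linarith

lemma continuousOn_rpow1 (a : ℝ) : ContinuousOn (fun x : ℝ => x ^ (a - 1)) (Ioo (0:ℝ) 1) :=
  ContinuousOn.rpow_const continuousOn_id (fun x hx => Or.inl hx.1.ne')

lemma continuousOn_rpow2 (b : ℝ) : ContinuousOn (fun x : ℝ => (1 - x) ^ (b - 1)) (Ioo (0:ℝ) 1) :=
  ContinuousOn.rpow_const ((continuous_const.sub continuous_id).continuousOn)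
    (fun x hx => Or.inl (by have := hx.2; intro h; linarith [sub_eq_zero.mp h]))

lemma continuousOn_kernel (p q : ℕ) (a b : ℝ) :
    ContinuousOn (fun x : ℝ => Real.log x ^ p * Real.log (1 - x) ^ q
      * (x ^ (a - 1) * (1 - x) ^ (b - 1))) (Ioo (0:ℝ) 1) :=
  ((continuousOn_log_Ioo.pow p).mul (continuousOn_log1_Ioo.pow q)).mul
    ((continuousOn_rpow1 a).mul (continuousOn_rpow2 b))

lemma continuousOn_kernel_abs (p q : ℕ) (a b : ℝ) :
    ContinuousOn (fun x : ℝ => |Real.log x| ^ p * |Real.log (1 - x)| ^ q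
      * (x ^ (a - 1) * (1 - x) ^ (b - 1))) (Ioo (0:ℝ) 1) :=
  ((continuousOn_log_Ioo.abs.pow p).mul (continuousOn_log1_Ioo.abs.pow q)).mul
    ((continuousOn_rpow1 a).mul (continuousOn_rpow2 b))

lemma integrableOn_master (p q : ℕ) {a b : ℝ} (ha : 0 < a) (hb : 0 < b) :
    IntegrableOn (fun x : ℝ => |Real.log x| ^ p * |Real.log (1 - x)| ^ q
      * (x ^ (a - 1) * (1 - x) ^ (b - 1))) (Ioo 0 1) := by
  set δ : ℝ := min (a / (p + 1)) (b / (q + 1)) with hδdef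
  have hδ : 0 < δ := lt_min (by positivity) (by positivity)
  have hc : 0 < a - p * δ := by
    have h1 : δ ≤ a / (p + 1) := min_le_left _ _
    have : (p : ℝ) * δ ≤ p * (a / (p+1)) := by
      apply mul_le_mul_of_nonneg_left h1 (by positivity)
    have h2 : (p:ℝ) * (a / (p+1)) < a := by
      rw [mul_div_assoc']
      rw [div_lt_iff₀ (by positivity)]
      nlinarith [ha]
    linarith
  have hd : 0 < b - q * δ := by
    have h1 : δ ≤ b / (q + 1) := min_le_right _ _
    have : (q : ℝ) * δ ≤ q * (b / (q+1)) := by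
      apply mul_le_mul_of_nonneg_left h1 (by positivity)
    have h2 : (q:ℝ) * (b / (q+1)) < b := by
      rw [mul_div_assoc', div_lt_iff₀ (by positivity)]
      nlinarith [hb]
    linarith
  have hint := (integrableOn_rpow_beta (c := a - p * δ) (d := b - q * δ) hc hd).const_mul
    ((1/δ) ^ (p + q))
  refine Integrable.mono' hint ?_ ?_
  · exact (continuousOn_kernel_abs p q a b).aestronglyMeasurable measurableSet_Ioo
  · rw [ae_restrict_iff' measurableSet_Ioo]
    filter_upwards with x hx
    obtain ⟨hx0, hx1⟩ := hx
    have h1x : 0 < 1 - x := by linarith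
    have hb1 : |Real.log x| ≤ x ^ (-δ) / δ := abs_log_le_rpow hx0 hx1 hδ
    have hb2 : |Real.log (1 - x)| ≤ (1-x) ^ (-δ) / δ := abs_log_le_rpow h1x (by linarith) hδ
    have hnn : (0:ℝ) ≤ x ^ (a-1) * (1-x) ^ (b-1) := by positivity
    rw [Real.norm_eq_abs, abs_of_nonneg (by positivity)]
    calc |Real.log x| ^ p * |Real.log (1 - x)| ^ q * (x ^ (a - 1) * (1 - x) ^ (b - 1))
        ≤ (x ^ (-δ) / δ) ^ p * ((1-x) ^ (-δ) / δ) ^ q * (x ^ (a - 1) * (1 - x) ^ (b - 1)) := by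
          gcongr <;> positivity
      _ = (1/δ) ^ (p + q) * (((x ^ (-δ)) ^ p * x ^ (a-1)) * (((1-x) ^ (-δ)) ^ q * (1-x) ^ (b-1))) := by
          ring
      _ = (1/δ) ^ (p + q) * (x ^ (a - p * δ - 1) * (1 - x) ^ (b - q * δ - 1)) := by
          have e1 : (x ^ (-δ)) ^ p * x ^ (a - 1) = x ^ (a - p * δ - 1) := by
            rw [← Real.rpow_natCast (x ^ (-δ)) p, ← Real.rpow_mul hx0.le,
              ← Real.rpow_add hx0]
            ring_nf
          have e2 : ((1-x) ^ (-δ)) ^ q * (1-x) ^ (b - 1) = (1-x) ^ (b - q * δ - 1) := by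
            rw [← Real.rpow_natCast ((1-x) ^ (-δ)) q, ← Real.rpow_mul h1x.le,
              ← Real.rpow_add h1x]
            ring_nf
          rw [e1, e2]

lemma integrableOn_Jf (p q : ℕ) {a b : ℝ} (ha : 0 < a) (hb : 0 < b) :
    IntegrableOn (Jf p q a b) (Ioo 0 1) := by
  refine Integrable.mono' (integrableOn_master p q ha hb)
    ((continuousOn_kernel p q a b).aestronglyMeasurable measurableSet_Ioo) ?_
  rw [ae_restrict_iff' measurableSet_Ioo]
  filter_upwards with x hx
  obtain ⟨hx0, hx1⟩ := hx
  have hK : (0:ℝ) ≤ x ^ (a-1) * (1-x) ^ (b-1) := by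
    have : (0:ℝ) < 1 - x := by linarith
    positivity
  rw [Real.norm_eq_abs, Jf, abs_mul, abs_mul, abs_pow, abs_pow, abs_of_nonneg hK]

lemma hasDerivAt_J_left (p q : ℕ) {a b : ℝ} (ha : 0 < a) (hb : 0 < b) :
    HasDerivAt (fun a' => J p q a' b) (J (p+1) q a b) a := by
  have key := hasDerivAt_integral_of_dominated_loc_of_deriv_le
    (μ := volume.restrict (Ioo (0:ℝ) 1)) (x₀ := a)
    (F := fun a' x => Jf p q a' b x) (F' := fun a' x => Jf (p+1) q a' b x)
    (bound := fun x => |Real.log x| ^ (p+1) * |Real.log (1 - x)| ^ q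
      * (x ^ (a/2 - 1) * (1 - x) ^ (b - 1)))
    (s := Metric.ball a (a/2)) (Metric.ball_mem_nhds a (by positivity))
    ?_ (integrableOn_Jf p q ha hb)
    ((continuousOn_kernel (p+1) q a b).aestronglyMeasurable measurableSet_Ioo)
    ?_ (integrableOn_master (p+1) q (by positivity) hb) ?_
  · exact key.2
  · filter_upwards with a'
    exact (continuousOn_kernel p q a' b).aestronglyMeasurable measurableSet_Ioo
  · rw [ae_restrict_iff' measurableSet_Ioo]
    filter_upwards with x hx a' ha'
    obtain ⟨hx0, hx1⟩ := hx
    have h1x : (0:ℝ) < 1 - x := by linarith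
    have ha2 : a/2 - 1 ≤ a' - 1 := by
      have := abs_lt.mp (by simpa [Real.dist_eq] using ha')
      linarith [this.1]
    have hmono : x ^ (a' - 1) ≤ x ^ (a/2 - 1) :=
      Real.rpow_le_rpow_of_exponent_ge hx0 hx1.le ha2
    have hK : (0:ℝ) ≤ x ^ (a'-1) * (1-x) ^ (b-1) := by positivity
    rw [Real.norm_eq_abs, Jf, abs_mul, abs_mul, abs_pow, abs_pow, abs_of_nonneg hK]
    gcongr
  · rw [ae_restrict_iff' measurableSet_Ioo]
    filter_upwards with x hx a' ha'
    obtain ⟨hx0, hx1⟩ := hx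
    have hrp : HasDerivAt (fun a' : ℝ => x ^ (a' - 1)) (Real.log x * x ^ (a' - 1)) a' := by
      have hinner : HasDerivAt (fun a' : ℝ => (a' - 1) * Real.log x) (Real.log x) a' := by
        simpa using ((hasDerivAt_id a').sub_const 1).mul_const (Real.log x)
      have hexp := hinner.exp
      have heq : (fun a' : ℝ => x ^ (a' - 1)) = fun a' : ℝ => Real.exp ((a' - 1) * Real.log x) := by
        funext y; rw [Real.rpow_def_of_pos hx0, mul_comm]
      rw [heq]
      convert hexp using 1
      rw [Real.rpow_def_of_pos hx0]; ring
    simp only [Jf]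
    have h2 := (hrp.mul_const ((1 - x) ^ (b - 1))).const_mul
      (Real.log x ^ p * Real.log (1 - x) ^ q)
    refine h2.congr_deriv ?_
    ring_nf

lemma J_eq_interval (p q : ℕ) (a b : ℝ) :
    J p q a b = ∫ x in (0:ℝ)..1, Jf p q a b x := by
  rw [intervalIntegral.integral_of_le zero_le_one, integral_Ioc_eq_integral_Ioo]
  rfl

lemma J_symm (p q : ℕ) (a b : ℝ) : J p q a b = J q p b a := by
  rw [J_eq_interval, J_eq_interval]
  have h := intervalIntegral.integral_comp_sub_left (a := (0:ℝ)) (b := 1) (Jf q p b a) 1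
  simp only [sub_zero, sub_self] at h
  rw [← h]
  apply intervalIntegral.integral_congr
  intro x _
  simp only [Jf, sub_sub_cancel]
  ring

lemma hasDerivAt_J_right (p q : ℕ) {a b : ℝ} (ha : 0 < a) (hb : 0 < b) :
    HasDerivAt (fun b' => J p q a b') (J p (q+1) a b) b := by
  have h := hasDerivAt_J_left q p hb ha
  have heq : (fun b' => J q p b' a) = fun b' => J p q a b' := by
    funext b'; exact (J_symm p q a b').symm
  rw [heq, J_symm] at h
  exact h

lemma J00_eq {a b : ℝ} (ha : 0 < a) (hb : 0 < b) : J 0 0 a b = Bfn a b := by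
  have h := Complex.Gamma_mul_Gamma_eq_betaIntegral (s := (a:ℂ)) (t := (b:ℂ))
    (by simpa) (by simpa)
  have hbeta : Complex.betaIntegral (a:ℂ) (b:ℂ) = ((J 0 0 a b : ℝ) : ℂ) := by
    rw [Complex.betaIntegral, J_eq_interval, ← intervalIntegral.integral_ofReal]
    apply intervalIntegral.integral_congr
    intro x hx
    rw [Set.uIcc_of_le zero_le_one] at hx
    obtain ⟨hx0, hx1⟩ := hx
    simp only [Jf, pow_zero, one_mul]
    push_cast
    rw [Complex.ofReal_cpow hx0 (a-1), Complex.ofReal_cpow (show (0:ℝ) ≤ 1-x by linarith) (b-1)]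
    push_cast
    ring
  rw [hbeta] at h
  have hreal : Real.Gamma a * Real.Gamma b = Real.Gamma (a+b) * J 0 0 a b := by
    rw [show ((a:ℂ) + (b:ℂ)) = (((a+b:ℝ)):ℂ) by push_cast; ring] at h
    rw [Complex.Gamma_ofReal, Complex.Gamma_ofReal, Complex.Gamma_ofReal] at h
    exact_mod_cast h
  have hG : Real.Gamma (a+b) ≠ 0 := (Real.Gamma_pos_of_pos (by linarith)).ne'
  rw [Bfn, eq_div_iff hG]
  linarith [hreal]

lemma J10_eq {a b : ℝ} (ha : 0 < a) (hb : 0 < b) :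
    J 1 0 a b = Bfn a b * (digamma a - digamma (a + b)) := by
  have h1 := hasDerivAt_J_left 0 0 ha hb
  have h2 := hasDerivAt_Bfn_left ha hb
  have heq : (fun a' => Bfn a' b) =ᶠ[nhds a] (fun a' => J 0 0 a' b) := by
    filter_upwards [Ioi_mem_nhds ha] with a' ha'
    exact (J00_eq ha' hb).symm
  exact (h1.congr_of_eventuallyEq heq).unique h2

lemma J01_eq {a b : ℝ} (ha : 0 < a) (hb : 0 < b) :
    J 0 1 a b = Bfn a b * (digamma b - digamma (a + b)) := by
  rw [J_symm, J10_eq hb ha, Bfn_symm, add_comm b a]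

lemma J11_eq {a b : ℝ} (ha : 0 < a) (hb : 0 < b) :
    J 1 1 a b = Bfn a b * ((digamma a - digamma (a + b)) * (digamma b - digamma (a + b))
      - trigamma (a + b)) := by
  have h1 := hasDerivAt_J_right 1 0 ha hb
  have h2 := hasDerivAt_Bfn_mixed ha hb
  have heq : (fun b' => Bfn a b' * (digamma a - digamma (a + b'))) =ᶠ[nhds b]
      (fun b' => J 1 0 a b') := by
    filter_upwards [Ioi_mem_nhds hb] with b' hb'
    exact (J10_eq ha hb').symm
  have h3 := (h1.congr_of_eventuallyEq heq).unique h2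
  rw [show J 1 1 a b = J 1 (0+1) a b from rfl, h3]

lemma betaMeasure_integral' {s t : ℝ} (hs : 0 < s) (ht : 0 < t) (g : ℝ → ℝ) :
    (∫ x, g x ∂(MeasureTheory.volume.withDensity (fun x => ENNReal.ofReal
      (if x ∈ Set.Ioo (0 : ℝ) 1 then
        x ^ (s - 1) * (1 - x) ^ (t - 1) * Real.Gamma (s + t) / (Real.Gamma s * Real.Gamma t)
      else 0))))
      = ∫ x in Ioo (0:ℝ) 1,
          (x ^ (s-1) * (1-x) ^ (t-1) * Real.Gamma (s+t) / (Real.Gamma s * Real.Gamma t))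
            * g x := by
  set r : ℝ → ℝ := fun x => if x ∈ Ioo (0:ℝ) 1 then
    x ^ (s-1) * (1-x) ^ (t-1) * Real.Gamma (s+t) / (Real.Gamma s * Real.Gamma t) else 0 with hr
  have hrmeas : Measurable r := by
    have hre : r = fun x => if x ∈ Ioo (0:ℝ) 1 then
        Real.exp (Real.log x * (s-1)) * Real.exp (Real.log (1-x) * (t-1))
          * Real.Gamma (s+t) / (Real.Gamma s * Real.Gamma t) else 0 := by
      funext x
      simp only [hr]
      split
      · rename_i hx
        rw [Real.rpow_def_of_pos hx.1, Real.rpow_def_of_pos (by linarith [hx.2] : (0:ℝ) < 1 - x)]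
      · rfl
    rw [hre]
    refine Measurable.ite measurableSet_Ioo ?_ measurable_const
    apply Measurable.div_const
    apply Measurable.mul_const
    exact ((Real.measurable_log.mul_const _).exp).mul
      (((Real.measurable_log.comp (measurable_const.sub measurable_id)).mul_const _).exp)
  have hmeasN : Measurable (fun x => (r x).toNNReal) := hrmeas.real_toNNReal
  have hb : (MeasureTheory.volume.withDensity (fun x => ENNReal.ofReal
      (if x ∈ Set.Ioo (0 : ℝ) 1 then
        x ^ (s - 1) * (1 - x) ^ (t - 1) * Real.Gamma (s + t) / (Real.Gamma s * Real.Gamma t)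
      else 0)))
      = MeasureTheory.volume.withDensity (fun x => ((r x).toNNReal : ℝ≥0∞)) := rfl
  rw [hb, integral_withDensity_eq_integral_smul hmeasN]
  have hind : (fun x => (r x).toNNReal • g x) = (Ioo (0:ℝ) 1).indicator
      (fun x => (x ^ (s-1) * (1-x) ^ (t-1) * Real.Gamma (s+t)
        / (Real.Gamma s * Real.Gamma t)) * g x) := by
    funext x
    rw [Set.indicator]
    by_cases hx : x ∈ Ioo (0:ℝ) 1
    · rw [if_pos hx]
      have hrx : r x = x ^ (s-1) * (1-x) ^ (t-1) * Real.Gamma (s+t)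
          / (Real.Gamma s * Real.Gamma t) := by rw [hr]; exact if_pos hx
      have hnn : 0 ≤ r x := by
        rw [hrx]
        have h1 : (0:ℝ) < 1 - x := by linarith [hx.2]
        have := hx.1
        have g1 := Real.Gamma_pos_of_pos (show (0:ℝ) < s + t by linarith)
        have g2 := Real.Gamma_pos_of_pos hs
        have g3 := Real.Gamma_pos_of_pos ht
        positivity
      rw [NNReal.smul_def, Real.coe_toNNReal _ hnn, hrx, smul_eq_mul]
    · rw [if_neg hx]
      have hrx : r x = 0 := by rw [hr]; exact if_neg hx
      simp [hrx]
  rw [hind, integral_indicator measurableSet_Ioo]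

lemma beta_int {s t : ℝ} (hs : 0 < s) (ht : 0 < t) (g : ℝ → ℝ) :
    ∫ x, g x ∂(betaDistMeasure s t)
      = ∫ x in Ioo (0:ℝ) 1,
          (x ^ (s-1) * (1-x) ^ (t-1) * Real.Gamma (s+t) / (Real.Gamma s * Real.Gamma t))
            * g x := by
  unfold betaDistMeasure
  exact betaMeasure_integral' hs ht g

/-- For `S ~ β(s, t)` with `s, t > 0`:
`E[ln(S) ln(1-S)] = -ψ′(s+t) + (ψ(s) - ψ(s+t))(ψ(t) - ψ(s+t))`; equivalently
`Cov(ln S, ln(1-S)) = -ψ′(s+t)`. -/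
theorem beta_log_cross_moment (s t : ℝ) (hs : 0 < s) (ht : 0 < t) :
    (∫ x, Real.log x * Real.log (1 - x) ∂(betaDistMeasure s t)
      = -trigamma (s + t) + (digamma s - digamma (s + t)) * (digamma t - digamma (s + t)))
    ∧ (∫ x, Real.log x * Real.log (1 - x) ∂(betaDistMeasure s t)
        - (∫ x, Real.log x ∂(betaDistMeasure s t)) * (∫ x, Real.log (1 - x) ∂(betaDistMeasure s t))
      = -trigamma (s + t)) := by
  have hst : (0:ℝ) < s + t := by linarith
  have hG1 := (Real.Gamma_pos_of_pos hs).ne'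
  have hG2 := (Real.Gamma_pos_of_pos ht).ne'
  have hG3 := (Real.Gamma_pos_of_pos hst).ne'
  set c := Real.Gamma (s+t) / (Real.Gamma s * Real.Gamma t) with hc
  have key : ∀ p q : ℕ, (∫ x, (Real.log x ^ p * Real.log (1-x) ^ q) ∂(betaDistMeasure s t))
      = c * J p q s t := by
    intro p q
    rw [beta_int hs ht, J, ← integral_const_mul]
    apply setIntegral_congr_fun measurableSet_Ioo
    intro x _
    simp only [Jf]
    ring
  have k11 : (∫ x, Real.log x * Real.log (1-x) ∂(betaDistMeasure s t)) = c * J 1 1 s t := by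
    have h := key 1 1; simp only [pow_one] at h; exact h
  have k10 : (∫ x, Real.log x ∂(betaDistMeasure s t)) = c * J 1 0 s t := by
    have h := key 1 0; simp only [pow_one, pow_zero, mul_one] at h; exact h
  have k01 : (∫ x, Real.log (1-x) ∂(betaDistMeasure s t)) = c * J 0 1 s t := by
    have h := key 0 1; simp only [pow_one, pow_zero, one_mul] at h; exact h
  have hBc : c * Bfn s t = 1 := by
    rw [hc]; unfold Bfn; field_simp
  have e : ∀ X : ℝ, c * (Bfn s t * X) = X := by
    intro X; rw [← mul_assoc, hBc, one_mul]
  rw [k11, k10, k01, J11_eq hs ht, J10_eq hs ht, J01_eq hs ht, e, e, e]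
  constructor
  · ring
  · ring
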